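/- For k ranging over 0 ≤ k ≤ n, the function E(k) = log₂( (n/k)^k (n/(n−k))^{n−k} / C(n,k) ) (with the conventions 0⁰ = 1) is maximized at k = n/2 when n is even, and at k = (n±1)/2 when n is odd. -/

import Mathlib

noncomputable def dickeEnt (n k : ℕ) : ℝ :=
  Real.logb 2 ((((n : ℝ) / k) ^ k * ((n : ℝ) / ((n - k : ℕ) : ℝ)) ^ (n - k))
    / (n.choose k : ℝ))

/-- Bernoulli-based key inequality. -/
private lemma bern (k : ℕ) :
    (k : ℝ) * ((k : ℝ) + 1) ^ (2 * k + 1) ≤ ((k : ℝ) * ((k : ℝ) + 2)) ^ (k + 1) := by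
  have hk0 : (0:ℝ) ≤ (k:ℝ) := Nat.cast_nonneg k
  have hk1 : (0:ℝ) < (k:ℝ) + 1 := by positivity
  have ha : (-2 : ℝ) ≤ -(1 / ((k:ℝ) + 1) ^ 2) := by
    have h1 : (1 / ((k:ℝ) + 1) ^ 2) ≤ 1 := by
      rw [div_le_one (by positivity)]
      nlinarith
    linarith
  have h := one_add_mul_le_pow ha (k + 1)
  have e1 : (1:ℝ) + -(1 / ((k:ℝ) + 1) ^ 2) = ((k:ℝ) * ((k:ℝ) + 2)) / ((k:ℝ) + 1) ^ 2 := by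
    field_simp
    ring
  have e2 : (1:ℝ) + ((k:ℕ) + 1 : ℕ) * -(1 / ((k:ℝ) + 1) ^ 2) = (k:ℝ) / ((k:ℝ) + 1) := by
    push_cast
    field_simp
    ring
  rw [e2, e1, div_pow] at h
  rw [div_le_div_iff₀ hk1 (by positivity)] at h
  have h2 : (k:ℝ) * (((k:ℝ) + 1) ^ 2) ^ (k + 1)
      = ((k:ℝ) * ((k : ℝ) + 1) ^ (2 * k + 1)) * ((k:ℝ) + 1) := by
    rw [← pow_mul]
    rw [show 2 * (k + 1) = (2 * k + 1) + 1 by ring, pow_succ]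
    ring
  rw [h2] at h
  exact le_of_mul_le_mul_right h hk1

private lemma stepNat (k : ℕ) :
    k * (k + 1) ^ (2 * k + 1) ≤ k * (k ^ k * (k + 2) ^ (k + 1)) := by
  have h := bern k
  have e : ((k:ℝ) * ((k:ℝ) + 2)) ^ (k + 1) = (k:ℝ) * ((k:ℝ) ^ k * ((k:ℝ) + 2) ^ (k + 1)) := by
    rw [mul_pow]; ring
  rw [e] at h
  exact_mod_cast h

/-- monotonicity of (1+1/k)^k, in natural-number form. -/
private lemma monoB (k : ℕ) : ∀ m, k ≤ m → (k + 1) ^ k * m ^ m ≤ k ^ k * (m + 1) ^ m := by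
  intro m hm
  induction m, hm using Nat.le_induction with
  | base => rw [Nat.mul_comm]
  | succ m hkm ih =>
    rcases Nat.eq_zero_or_pos m with hm0 | hm0
    · subst hm0
      interval_cases k
      simp
    have h1 : (k + 1) ^ k * m ^ m * (m + 1) ^ (m + 1) ≤ k ^ k * (m + 1) ^ (2 * m + 1) := by
      have : (m + 1) ^ m * (m + 1) ^ (m + 1) = (m + 1) ^ (2 * m + 1) := by
        rw [← pow_add]; congr 1; omega
      calc (k + 1) ^ k * m ^ m * (m + 1) ^ (m + 1)
          ≤ k ^ k * (m + 1) ^ m * (m + 1) ^ (m + 1) := Nat.mul_le_mul_right _ ih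
        _ = k ^ k * (m + 1) ^ (2 * m + 1) := by rw [mul_assoc, this]
    have h2 := stepNat m
    have h3 : m * ((k + 1) ^ k * m ^ m * (m + 1) ^ (m + 1))
        ≤ m * (m ^ m * (k ^ k * (m + 2) ^ (m + 1))) := by
      calc m * ((k + 1) ^ k * m ^ m * (m + 1) ^ (m + 1))
          ≤ m * (k ^ k * (m + 1) ^ (2 * m + 1)) := Nat.mul_le_mul_left _ h1
        _ = k ^ k * (m * (m + 1) ^ (2 * m + 1)) := by ring
        _ ≤ k ^ k * (m * (m ^ m * (m + 2) ^ (m + 1))) := Nat.mul_le_mul_left _ h2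
        _ = m * (m ^ m * (k ^ k * (m + 2) ^ (m + 1))) := by ring
    have h4 : m ^ m * ((k + 1) ^ k * (m + 1) ^ (m + 1))
        ≤ m ^ m * (k ^ k * (m + 2) ^ (m + 1)) := by
      have := Nat.le_of_mul_le_mul_left h3 hm0
      calc m ^ m * ((k + 1) ^ k * (m + 1) ^ (m + 1))
          = (k + 1) ^ k * m ^ m * (m + 1) ^ (m + 1) := by ring
        _ ≤ m ^ m * (k ^ k * (m + 2) ^ (m + 1)) := this
    exact Nat.le_of_mul_le_mul_left h4 (pow_pos hm0 m)

/-- the denominator quantity, as a natural number. -/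
private def D (n k : ℕ) : ℕ := k ^ k * (n - k) ^ (n - k) * n.choose k

private lemma Dstep (n k : ℕ) (h : 2 * k + 1 ≤ n) : D n (k + 1) ≤ D n k := by
  set m := n - (k + 1) with hm
  have hnk : n - k = m + 1 := by omega
  have hkm : k ≤ m := by omega
  have key := monoB k m hkm
  have hch : n.choose (k + 1) * (k + 1) = n.choose k * (m + 1) := by
    rw [Nat.choose_succ_right_eq, hnk]
  have main : D n (k + 1) * (k + 1) ≤ D n k * (k + 1) := by
    have e1 : D n (k + 1) * (k + 1)
        = (k + 1) * (m + 1) * ((k + 1) ^ k * m ^ m) * n.choose k := by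
      unfold D
      rw [hm] at *
      calc (k + 1) ^ (k + 1) * (n - (k+1)) ^ (n - (k+1)) * n.choose (k + 1) * (k + 1)
          = (k + 1) ^ (k + 1) * m ^ m * (n.choose (k + 1) * (k + 1)) := by rw [← hm]; ring
        _ = (k + 1) ^ (k + 1) * m ^ m * (n.choose k * (m + 1)) := by rw [hch]
        _ = (k + 1) * (m + 1) * ((k + 1) ^ k * m ^ m) * n.choose k := by
            rw [pow_succ]; ring
    have e2 : D n k * (k + 1)
        = (k + 1) * (m + 1) * (k ^ k * (m + 1) ^ m) * n.choose k := by
      unfold D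
      rw [hnk, pow_succ]
      ring
    rw [e1, e2]
    exact Nat.mul_le_mul_right _ (Nat.mul_le_mul_left _ key)
  exact Nat.le_of_mul_le_mul_right main (Nat.succ_pos k)

private lemma Dmono (n : ℕ) : ∀ j', 2 * j' ≤ n + 1 → ∀ j ≤ j', D n j' ≤ D n j := by
  intro j'
  induction j' with
  | zero => intro _ j hj; interval_cases j; rfl
  | succ i ih =>
    intro h j hj
    rcases Nat.eq_or_lt_of_le hj with rfl | hlt
    · rfl
    · exact le_trans (Dstep n i (by omega)) (ih (by omega) j (by omega))

private lemma Dsymm (n k : ℕ) (h : k ≤ n) : D n (n - k) = D n k := by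
  unfold D
  rw [Nat.sub_sub_self h, Nat.choose_symm h]
  ring

private lemma Dmin (n k : ℕ) (hk : k ≤ n) : D n ((n + 1) / 2) ≤ D n k := by
  rcases le_or_gt k ((n + 1) / 2) with h | h
  · exact Dmono n ((n + 1) / 2) (by omega) k h
  · rw [← Dsymm n k hk]
    exact Dmono n ((n + 1) / 2) (by omega) (n - k) (by omega)

private lemma Dpos (n k : ℕ) (hk : k ≤ n) : 0 < D n k := by
  have h1 : 0 < k ^ k := by
    rcases Nat.eq_zero_or_pos k with rfl | h; · simp
    · exact pow_pos h k
  have h2 : 0 < (n - k) ^ (n - k) := by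
    rcases Nat.eq_zero_or_pos (n - k) with h | h; · rw [h]; simp
    · exact pow_pos h _
  exact Nat.mul_pos (Nat.mul_pos h1 h2) (Nat.choose_pos hk)

private lemma F_eq (n k : ℕ) (hk : k ≤ n) :
    (((n : ℝ) / k) ^ k * ((n : ℝ) / ((n - k : ℕ) : ℝ)) ^ (n - k)) / (n.choose k : ℝ)
      = (n : ℝ) ^ n / (D n k : ℝ) := by
  rw [div_pow, div_pow, div_mul_div_comm, ← pow_add, Nat.add_sub_cancel' hk]
  unfold D
  push_cast
  rw [div_div]

theorem dicke_entanglement_maximized_at_half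
    (n : ℕ) (hn : 0 < n) :
    ∀ k ≤ n, dickeEnt n k ≤ dickeEnt n (n / 2) ∧ dickeEnt n k ≤ dickeEnt n ((n + 1) / 2) := by
  have hb : (1:ℝ) < 2 := one_lt_two
  intro k hk
  have key : ∀ m ≤ n, D n m = D n ((n + 1) / 2) → dickeEnt n k ≤ dickeEnt n m := by
    intro m hm hDm
    unfold dickeEnt
    rw [F_eq n k hk, F_eq n m hm]
    have hDk : (0:ℝ) < (D n k : ℝ) := by exact_mod_cast Dpos n k hk
    have hDm' : (0:ℝ) < (D n m : ℝ) := by exact_mod_cast Dpos n m hm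
    have hnn : (0:ℝ) < (n:ℝ) ^ n := by positivity
    apply Real.logb_le_logb_of_le hb (by positivity)
    apply div_le_div_of_nonneg_left hnn.le hDm'
    have : D n m ≤ D n k := hDm ▸ Dmin n k hk
    exact_mod_cast this
  have e1 : D n (n / 2) = D n ((n + 1) / 2) := by
    have h2 : n / 2 = n - (n + 1) / 2 := by omega
    rw [h2, Dsymm n ((n + 1) / 2) (by omega)]
  exact ⟨key (n / 2) (by omega) e1, key ((n + 1) / 2) (by omega) rfl⟩
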